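/- Let 1 ≤ p < ∞ and let M be an Orlicz function satisfying the Δ₂-condition at 0. Then M is equivalent on the segment [0,1] to a p-convex Orlicz function if and only if there exists a constant C > 0 such that M(st) ≤ C·s^p·M(t) for all 0 < s < 1 and all 0 < t ≤ 1. -/

import Mathlib

open MeasureTheory Set

noncomputable section

/-- An Orlicz function: increasing, convex on `[0,∞)` with `M 0 = 0`. -/
def IsOrliczFunction (M : ℝ → ℝ) : Prop :=
  MonotoneOn M (Ici 0) ∧ ConvexOn ℝ (Ici 0) M ∧ M 0 = 0

/-- `M` is `r`-convex: `t ↦ M (t ^ (1/r))` is convex on `[0,∞)`. -/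
def RConvex (r : ℝ) (M : ℝ → ℝ) : Prop :=
  ConvexOn ℝ (Ici 0) fun t : ℝ => M (t ^ (1 / r))

/-- The `Δ₂`-condition at zero. -/
def Delta2AtZero (M : ℝ → ℝ) : Prop :=
  ∃ u₀ > (0:ℝ), ∃ C > (0:ℝ), ∀ u : ℝ, 0 < u → u < u₀ → M (2 * u) ≤ C * M u

/-- Two functions are equivalent on the segment `[0,1]`. -/
def EquivOn01 (M N : ℝ → ℝ) : Prop :=
  ∃ C > (0:ℝ), ∀ t ∈ Icc (0:ℝ) 1, C⁻¹ * M t ≤ N t ∧ N t ≤ C * M t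

/-! ### Auxiliary lemmas for the construction -/

section GenericIntegral
open intervalIntegral

lemma myIntegrable (f : ℝ → ℝ) (hf : MonotoneOn f (Ici 0)) {a b : ℝ}
    (ha : 0 ≤ a) (hb : 0 ≤ b) : IntervalIntegrable f volume a b :=
  (hf.mono (fun _ hx => le_trans (le_inf ha hb) hx.1)).intervalIntegrable

lemma myIntBounds (f : ℝ → ℝ) (hf : MonotoneOn f (Ici 0)) {a b : ℝ}
    (ha : 0 ≤ a) (hab : a ≤ b) :
    (b - a) * f a ≤ (∫ w in a..b, f w) ∧ (∫ w in a..b, f w) ≤ (b - a) * f b := by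
  have hb : 0 ≤ b := ha.trans hab
  have hi := myIntegrable f hf ha hb
  constructor
  · have := integral_mono_on hab intervalIntegrable_const hi
      (fun x hx => hf ha (ha.trans hx.1) hx.1)
    simpa [intervalIntegral.integral_const, smul_eq_mul] using this
  · have := integral_mono_on hab hi intervalIntegrable_const
      (fun x hx => hf (ha.trans hx.1) hb hx.2)
    simpa [intervalIntegral.integral_const, smul_eq_mul] using this

lemma myGdiff (f : ℝ → ℝ) (hf : MonotoneOn f (Ici 0)) {a b : ℝ}
    (ha : 0 ≤ a) (hab : a ≤ b) :
    (∫ w in (0:ℝ)..b, f w) - (∫ w in (0:ℝ)..a, f w) = ∫ w in a..b, f w := by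
  have h := integral_add_adjacent_intervals (myIntegrable f hf le_rfl ha)
    (myIntegrable f hf ha (ha.trans hab))
  linarith [h]

lemma myGmono (f : ℝ → ℝ) (hf : MonotoneOn f (Ici 0)) (hf0 : ∀ x, 0 ≤ f x) :
    MonotoneOn (fun v => ∫ w in (0:ℝ)..v, f w) (Ici 0) := by
  intro a ha b hb hab
  simp only
  have h1 := (myIntBounds f hf ha hab).1
  have h2 := myGdiff f hf ha hab
  nlinarith [hf0 a]

lemma myGconvex (f : ℝ → ℝ) (hf : MonotoneOn f (Ici 0)) :
    ConvexOn ℝ (Ici 0) (fun v => ∫ w in (0:ℝ)..v, f w) := by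
  apply convexOn_of_slope_mono_adjacent (convex_Ici 0)
  intro x y z hx hz hxy hyz
  have hy : (0:ℝ) ≤ y := hx.out.trans hxy.le
  have d1 := myGdiff f hf hx.out hxy.le
  have d2 := myGdiff f hf hy hyz.le
  have b1 := (myIntBounds f hf hx.out hxy.le).2
  have b2 := (myIntBounds f hf hy hyz.le).1
  rw [d1, d2]
  rw [div_le_div_iff₀ (by linarith) (by linarith)]
  nlinarith [b1, b2]

end GenericIntegral

/-- The "almost increasing envelope" of `M t / t ^ p` near zero. -/
noncomputable def psiAux (p : ℝ) (M : ℝ → ℝ) (u : ℝ) : ℝ :=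
  sSup ((fun w => M w / w ^ p) '' Ioc 0 (min u 1))

section psi
variable {p C : ℝ} {M : ℝ → ℝ}

lemma psi_nonneg (hMnn : ∀ t, 0 ≤ t → 0 ≤ M t) (u : ℝ) : 0 ≤ psiAux p M u := by
  apply Real.sSup_nonneg
  rintro x ⟨w, ⟨hw0, _⟩, rfl⟩
  exact div_nonneg (hMnn w hw0.le) (Real.rpow_nonneg hw0.le p)

lemma psi_bdd (hM1 : M 1 = 1) (hC1 : 1 ≤ C)
    (hkey : ∀ s t : ℝ, 0 < s → s < 1 → 0 < t → t ≤ 1 → M (s * t) ≤ C * s ^ p * M t)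
    (u : ℝ) : BddAbove ((fun w => M w / w ^ p) '' Ioc 0 (min u 1)) := by
  refine ⟨C, ?_⟩
  rintro x ⟨w, ⟨hw0, hwu⟩, rfl⟩
  have hw1 : w ≤ 1 := hwu.trans (min_le_right u 1)
  rcases eq_or_lt_of_le hw1 with h | h
  · simp only [h, Real.one_rpow, hM1, div_one]; exact hC1
  · have := hkey w 1 hw0 h one_pos le_rfl
    rw [mul_one, hM1, mul_one] at this
    rw [div_le_iff₀ (Real.rpow_pos_of_pos hw0 p)]
    linarith

lemma psi_mono (hMnn : ∀ t, 0 ≤ t → 0 ≤ M t) (hM1 : M 1 = 1) (hC1 : 1 ≤ C)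
    (hkey : ∀ s t : ℝ, 0 < s → s < 1 → 0 < t → t ≤ 1 → M (s * t) ≤ C * s ^ p * M t) :
    Monotone (psiAux p M) := by
  intro u v huv
  rcases le_or_gt (min u 1) 0 with h | h
  · unfold psiAux
    rw [Ioc_eq_empty (not_lt.mpr h), image_empty, Real.sSup_empty]
    exact psi_nonneg hMnn v
  · apply csSup_le_csSup (psi_bdd hM1 hC1 hkey v)
    · obtain ⟨w, hw⟩ := nonempty_Ioc.mpr h
      exact ⟨_, mem_image_of_mem _ hw⟩
    · exact image_mono (Ioc_subset_Ioc_right (min_le_min huv le_rfl))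

lemma le_psi (hM1 : M 1 = 1) (hC1 : 1 ≤ C)
    (hkey : ∀ s t : ℝ, 0 < s → s < 1 → 0 < t → t ≤ 1 → M (s * t) ≤ C * s ^ p * M t)
    {u : ℝ} (hu0 : 0 < u) (hu1 : u ≤ 1) : M u / u ^ p ≤ psiAux p M u :=
  le_csSup (psi_bdd hM1 hC1 hkey u) ⟨u, ⟨hu0, le_min le_rfl hu1⟩, rfl⟩

lemma psi_le (hMnn : ∀ t, 0 ≤ t → 0 ≤ M t) (hC1 : 1 ≤ C)
    (hkey : ∀ s t : ℝ, 0 < s → s < 1 → 0 < t → t ≤ 1 → M (s * t) ≤ C * s ^ p * M t)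
    {u : ℝ} (hu0 : 0 < u) (hu1 : u ≤ 1) :
    psiAux p M u ≤ C * (M u / u ^ p) := by
  have hup : (0:ℝ) < u ^ p := Real.rpow_pos_of_pos hu0 p
  have hbnd : 0 ≤ C * (M u / u ^ p) := by
    have := hMnn u hu0.le; positivity
  apply Real.sSup_le _ hbnd
  rintro x ⟨w, ⟨hw0, hwu⟩, rfl⟩
  have hwu' : w ≤ u := hwu.trans (min_le_left u 1)
  have hwp : (0:ℝ) < w ^ p := Real.rpow_pos_of_pos hw0 p
  rcases eq_or_lt_of_le hwu' with h | h
  · subst h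
    simp only
    nlinarith [div_nonneg (hMnn w hw0.le) hwp.le]
  · have hs0 : 0 < w / u := div_pos hw0 hu0
    have hs1 : w / u < 1 := (div_lt_one hu0).mpr h
    have hk := hkey (w / u) u hs0 hs1 hu0 hu1
    rw [div_mul_cancel₀ _ hu0.ne'] at hk
    rw [Real.div_rpow hw0.le hu0.le p] at hk
    simp only
    rw [div_le_iff₀ hwp]
    calc M w ≤ C * (w ^ p / u ^ p) * M u := hk
    _ = C * (M u / u ^ p) * w ^ p := by ring
end psi

/-- An Orlicz function `M` satisfying the `Δ₂`-condition at `0` is equivalent on `[0,1]` to a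
`p`-convex Orlicz function iff `M(st) ≤ C s^p M(t)` for all `0 < s < 1`, `0 < t ≤ 1`. -/
theorem equivalent_to_p_convex_iff
    (p : ℝ) (hp : 1 ≤ p)
    (M : ℝ → ℝ) (hM : IsOrliczFunction M) (hM1 : M 1 = 1)
    (hMbij : Set.BijOn M (Ici 0) (Ici 0))
    (hΔ₂ : Delta2AtZero M) :
    (∃ N : ℝ → ℝ, IsOrliczFunction N ∧ RConvex p N ∧ EquivOn01 M N) ↔
      (∃ C > (0:ℝ), ∀ s t : ℝ, 0 < s → s < 1 → 0 < t → t ≤ 1 →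
        M (s * t) ≤ C * s ^ p * M t) := by
  have hp0 : p ≠ 0 := by linarith
  have hMnn : ∀ t, 0 ≤ t → 0 ≤ M t := fun t ht => by
    have := hM.1 (self_mem_Ici) ht ht
    rw [hM.2.2] at this; exact this
  constructor
  · -- forward direction
    rintro ⟨N, hN, hNp, C, hC, hbd⟩
    refine ⟨C * C, by positivity, fun s t hs hs1 ht ht1 => ?_⟩
    have hst0 : 0 < s * t := mul_pos hs ht
    have hst1 : s * t ≤ 1 := by nlinarith
    have hG0 : N ((0:ℝ) ^ (1/p)) = 0 := by
      rw [Real.zero_rpow (by simp [hp0]), hN.2.2]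
    have hsp1 : s ^ p ≤ 1 := Real.rpow_le_one hs.le hs1.le (by linarith)
    have hsp0 : 0 ≤ s ^ p := Real.rpow_nonneg hs.le p
    have key := hNp.2 (x := t ^ p) (y := 0) (by exact Real.rpow_nonneg ht.le p)
      (le_refl (0:ℝ)) hsp0 (by linarith : (0:ℝ) ≤ 1 - s ^ p) (by ring)
    simp only [smul_eq_mul, mul_zero, add_zero] at key
    rw [hG0, mul_zero, add_zero] at key
    have e1 : (s ^ p * t ^ p) = (s * t) ^ p := (Real.mul_rpow hs.le ht.le).symm
    have e2 : ((s * t) ^ p) ^ (1/p) = s * t := by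
      rw [one_div]; exact Real.rpow_rpow_inv hst0.le hp0
    have e3 : (t ^ p) ^ (1/p) = t := by
      rw [one_div]; exact Real.rpow_rpow_inv ht.le hp0
    rw [e1, e2, e3] at key
    have h1 : M (s * t) ≤ C * N (s * t) := by
      have := (hbd (s * t) ⟨hst0.le, hst1⟩).1
      calc M (s * t) = C * (C⁻¹ * M (s * t)) := by field_simp
      _ ≤ C * N (s * t) := by nlinarith
    have h2 : N t ≤ C * M t := (hbd t ⟨ht.le, ht1⟩).2
    calc M (s * t) ≤ C * N (s * t) := h1
    _ ≤ C * (s ^ p * N t) := by nlinarith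
    _ ≤ C * (s ^ p * (C * M t)) :=
      mul_le_mul_of_nonneg_left (mul_le_mul_of_nonneg_left h2 hsp0) hC.le
    _ = C * C * s ^ p * M t := by ring
  · -- backward direction: construct N
    rintro ⟨C₀, hC₀, hkey₀⟩
    set C := max C₀ 1 with hCdef
    have hC1 : (1:ℝ) ≤ C := le_max_right _ _
    have hkey : ∀ s t : ℝ, 0 < s → s < 1 → 0 < t → t ≤ 1 →
        M (s * t) ≤ C * s ^ p * M t := by
      intro s t hs hs1 ht ht1
      refine (hkey₀ s t hs hs1 ht ht1).trans ?_
      have : 0 ≤ s ^ p * M t := mul_nonneg (Real.rpow_nonneg hs.le p) (hMnn t ht.le)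
      calc C₀ * s ^ p * M t = C₀ * (s ^ p * M t) := by ring
      _ ≤ C * (s ^ p * M t) := mul_le_mul_of_nonneg_right (le_max_left _ _) this
      _ = C * s ^ p * M t := by ring
    -- the integrand
    set f : ℝ → ℝ := fun w => psiAux p M (w ^ (1/p)) with hfdef
    have hψmono := psi_mono (p := p) hMnn hM1 hC1 hkey
    have hψnn := psi_nonneg (p := p) (M := M) hMnn
    have hfmono : MonotoneOn f (Ici 0) := by
      intro a ha b hb hab
      exact hψmono (Real.rpow_le_rpow ha hab (by positivity))
    have hfnn : ∀ x, 0 ≤ f x := fun x => hψnn _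
    set G : ℝ → ℝ := fun v => ∫ w in (0:ℝ)..v, f w with hGdef
    set N : ℝ → ℝ := fun t => G (t ^ p) with hNdef
    have hG0 : G 0 = 0 := intervalIntegral.integral_same
    have hGmono := myGmono f hfmono hfnn
    have hGconv := myGconvex f hfmono
    have hGnn : ∀ v, 0 ≤ v → 0 ≤ G v := fun v hv => by
      have h1 := (myIntBounds f hfmono (le_refl 0) hv).1
      rw [sub_zero] at h1
      exact le_trans (mul_nonneg hv (hfnn 0)) h1
    have hN0 : N 0 = 0 := by
      simp only [hNdef, Real.zero_rpow hp0, hG0]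
    have hNmono : MonotoneOn N (Ici 0) := fun a ha b hb hab =>
      hGmono (Real.rpow_nonneg ha p) (Real.rpow_nonneg hb p)
        (Real.rpow_le_rpow ha hab (by linarith))
    have himg : (fun t : ℝ => t ^ p) '' Ici 0 = Ici (0:ℝ) := by
      ext y
      constructor
      · rintro ⟨x, hx, rfl⟩; exact Real.rpow_nonneg hx p
      · intro hy
        exact ⟨y ^ p⁻¹, Real.rpow_nonneg hy _, Real.rpow_inv_rpow hy hp0⟩
    have hNconv : ConvexOn ℝ (Ici 0) N := by
      have := ConvexOn.comp (f := fun t : ℝ => t ^ p) (g := G)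
        (by rw [himg]; exact hGconv) (convexOn_rpow hp) (by rw [himg]; exact hGmono)
      exact this
    have hNrconv : RConvex p N := by
      apply hGconv.congr
      intro v hv
      simp only [hNdef]
      rw [one_div, Real.rpow_inv_rpow hv.out hp0]
    -- key pointwise bounds on (0,1]
    have hupper : ∀ t, 0 < t → t ≤ 1 → N t ≤ C * M t := by
      intro t ht ht1
      have htp : (0:ℝ) < t ^ p := Real.rpow_pos_of_pos ht p
      have hb := (myIntBounds f hfmono (le_refl 0) htp.le).2
      rw [sub_zero] at hb
      have hfe : f (t ^ p) = psiAux p M t := by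
        simp only [hfdef]
        rw [one_div, Real.rpow_rpow_inv ht.le hp0]
      have h2 : psiAux p M t ≤ C * (M t / t ^ p) := psi_le hMnn hC1 hkey ht ht1
      calc N t = ∫ w in (0:ℝ)..(t ^ p), f w := rfl
      _ ≤ t ^ p * f (t ^ p) := hb
      _ = t ^ p * psiAux p M t := by rw [hfe]
      _ ≤ t ^ p * (C * (M t / t ^ p)) := mul_le_mul_of_nonneg_left h2 htp.le
      _ = C * M t := by field_simp
    have hlower : ∀ t, 0 < t → t ≤ 1 → M (t / 2) ≤ N t := by
      intro t ht ht1
      have ht2 : (0:ℝ) < t / 2 := by linarith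
      have ha : (0:ℝ) < (t/2) ^ p := Real.rpow_pos_of_pos ht2 p
      have hab : (t/2) ^ p ≤ t ^ p := Real.rpow_le_rpow ht2.le (by linarith) (by linarith)
      have hb := (myIntBounds f hfmono ha.le hab).1
      have hd := myGdiff f hfmono ha.le hab
      have hfe : f ((t/2) ^ p) = psiAux p M (t/2) := by
        simp only [hfdef]
        rw [one_div, Real.rpow_rpow_inv ht2.le hp0]
      have hpl : M (t/2) / (t/2) ^ p ≤ psiAux p M (t/2) :=
        le_psi hM1 hC1 hkey ht2 (by linarith)
      have htp2 : t ^ p = 2 ^ p * (t/2) ^ p := by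
        rw [← Real.mul_rpow (by norm_num) ht2.le]
        congr 1; ring
      have h2p : (2:ℝ) ≤ 2 ^ p := by
        calc (2:ℝ) = 2 ^ (1:ℝ) := (Real.rpow_one 2).symm
        _ ≤ 2 ^ p := Real.rpow_le_rpow_of_exponent_le (by norm_num) hp
      have hGa : 0 ≤ G ((t/2) ^ p) := hGnn _ ha.le
      have hMt2 : 0 ≤ M (t/2) := hMnn _ ht2.le
      -- N t = G(t^p) ≥ G(a) + (b-a) f a ≥ (b-a) ψ(t/2) ≥ (2^p-1) M(t/2) ≥ M(t/2)
      have step1 : (t ^ p - (t/2) ^ p) * psiAux p M (t/2) ≤ N t := by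
        rw [hfe] at hb
        simp only [hNdef]
        have : G (t ^ p) - G ((t/2) ^ p) = ∫ w in ((t/2) ^ p)..(t ^ p), f w := hd
        nlinarith
      have step2 : (2 ^ p - 1) * M (t/2) ≤ (t ^ p - (t/2) ^ p) * psiAux p M (t/2) := by
        have hfac : t ^ p - (t/2) ^ p = (2 ^ p - 1) * (t/2) ^ p := by
          rw [htp2]; ring
        rw [hfac]
        have h1 : M (t/2) = (M (t/2) / (t/2) ^ p) * (t/2) ^ p := by
          field_simp
        calc (2 ^ p - 1) * M (t/2) = (2 ^ p - 1) * ((M (t/2) / (t/2) ^ p) * (t/2) ^ p) := by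
              rw [← h1]
        _ ≤ (2 ^ p - 1) * (psiAux p M (t/2) * (t/2) ^ p) := by
              apply mul_le_mul_of_nonneg_left _ (by linarith)
              exact mul_le_mul_of_nonneg_right hpl ha.le
        _ = (2 ^ p - 1) * (t/2) ^ p * psiAux p M (t/2) := by ring
      nlinarith [step1, step2]
    -- extended Δ₂ on (0,1]
    obtain ⟨u₀, hu₀, C₂, hC₂, hΔ⟩ := hΔ₂
    have hMu₀ : 0 < M u₀ := by
      rcases lt_or_eq_of_le (hMnn u₀ hu₀.le) with h | h
      · exact h
      · exfalso
        have : u₀ = 0 := hMbij.injOn hu₀.le (le_refl (0:ℝ)) (by rw [← h, hM.2.2])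
        linarith
    set K₂ : ℝ := max C₂ (M u₀)⁻¹ with hK₂def
    have hK₂ : 0 < K₂ := lt_of_lt_of_le hC₂ (le_max_left _ _)
    have hD : ∀ t, 0 < t → t ≤ 1 → M t ≤ K₂ * M (t/2) := by
      intro t ht ht1
      have ht2 : (0:ℝ) < t / 2 := by linarith
      have hMt2 : 0 ≤ M (t/2) := hMnn _ ht2.le
      rcases lt_or_ge (t/2) u₀ with h | h
      · have := hΔ (t/2) ht2 h
        have he : 2 * (t/2) = t := by ring
        rw [he] at this
        calc M t ≤ C₂ * M (t/2) := this
        _ ≤ K₂ * M (t/2) := mul_le_mul_of_nonneg_right (le_max_left _ _) hMt2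
      · have h1 : M t ≤ 1 := by
          rw [← hM1]; exact hM.1 ht.le (by norm_num) ht1
        have h2 : M u₀ ≤ M (t/2) := hM.1 hu₀.le ht2.le h
        calc M t ≤ 1 := h1
        _ = (M u₀)⁻¹ * M u₀ := by field_simp
        _ ≤ (M u₀)⁻¹ * M (t/2) := by
              apply mul_le_mul_of_nonneg_left h2 (by positivity)
        _ ≤ K₂ * M (t/2) := mul_le_mul_of_nonneg_right (le_max_right _ _) hMt2
    -- assemble
    refine ⟨N, ⟨hNmono, hNconv, hN0⟩, hNrconv, max C K₂, by positivity, ?_⟩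
    intro t ⟨ht0, ht1⟩
    have hK : (0:ℝ) < max C K₂ := by positivity
    rcases eq_or_lt_of_le ht0 with h | h
    · simp [← h, hN0, hM.2.2]
    · have hNt : 0 ≤ N t := (hMnn _ (by linarith)).trans (hlower t h ht1)
      have hMt : 0 ≤ M t := hMnn t h.le
      constructor
      · have : M t ≤ max C K₂ * N t := by
          calc M t ≤ K₂ * M (t/2) := hD t h ht1
          _ ≤ K₂ * N t := mul_le_mul_of_nonneg_left (hlower t h ht1) hK₂.le
          _ ≤ max C K₂ * N t := mul_le_mul_of_nonneg_right (le_max_right _ _) hNt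
        calc (max C K₂)⁻¹ * M t ≤ (max C K₂)⁻¹ * (max C K₂ * N t) :=
              mul_le_mul_of_nonneg_left this (by positivity)
        _ = N t := by field_simp
      · calc N t ≤ C * M t := hupper t h ht1
        _ ≤ max C K₂ * M t := mul_le_mul_of_nonneg_right (le_max_left _ _) hMt
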